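/- For every s ∈ (0, 1/2), the map V_0^1 ∘ H_0^1 on 𝕋² satisfies (V_0^1 ∘ H_0^1)(s, s + 1/2) = (1/2, s), (V_0^1 ∘ H_0^1)(1/2, s) = (s + 1/2, 1/2), and (V_0^1 ∘ H_0^1)(s + 1/2, 1/2) = (s, s + 1/2) (all coordinates taken modulo 1). Consequently the three segments {(s, s + 1/2) : s ∈ (0, 1/2)}, {(1/2, s) : s ∈ (0, 1/2)}, and {(s, 1/2) : s ∈ (1/2, 1)} form a 3-cycle for V_0^1 ∘ H_0^1, and every point of each of these segments is a fixed point of (V_0^1 ∘ H_0^1)³. -/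
import Mathlib


/- 𝕋 = ℝ/ℤ, with d_𝕋 the quotient distance (norm of the difference in AddCircle 1). -/
noncomputable section

abbrev T1 := AddCircle (1 : ℝ)

/-- The distance d_𝕋(x,y) = min{|x−y|, 1−|x−y|} on 𝕋. -/
noncomputable def dT (x y : T1) : ℝ := ‖x - y‖

/-- Horizontal wedge flow map H_ω^τ(x₁,x₂) = (x₁ + τ·d_𝕋(x₂,ω), x₂). -/
noncomputable def Hmap (ω : T1) (τ : ℝ) (p : T1 × T1) : T1 × T1 :=
  (p.1 + (↑(τ * dT p.2 ω) : T1), p.2)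

/-- Vertical wedge flow map V_ω^τ(x₁,x₂) = (x₁, x₂ + τ·d_𝕋(x₁,ω)). -/
noncomputable def Vmap (ω : T1) (τ : ℝ) (p : T1 × T1) : T1 × T1 :=
  (p.1, p.2 + (↑(τ * dT p.1 ω) : T1))

lemma dT_zero (x : ℝ) : dT ((x : ℝ) : T1) 0 = |x - round x| := by
  rw [dT, sub_zero, AddCircle.norm_eq]
  norm_num

/-- for s ∈ (0,1/2), V_0^1 ∘ H_0^1 maps (s, s+1/2) ↦ (1/2, s) ↦
(s+1/2, 1/2) ↦ (s, s+1/2); so the three segments {(s, s+1/2) : s ∈ (0,1/2)},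
{(1/2, s) : s ∈ (0,1/2)}, {(s, 1/2) : s ∈ (1/2,1)} form a 3-cycle for V_0^1 ∘ H_0^1, and
every point of each of these segments is a fixed point of (V_0^1 ∘ H_0^1)³. -/
theorem wedge_tau1_three_cycle :
    ∀ s ∈ Set.Ioo (0 : ℝ) (1/2),
      (Vmap 0 1 ∘ Hmap 0 1) (((s : ℝ) : T1), ((s + 1/2 : ℝ) : T1)) =
        (((1/2 : ℝ) : T1), ((s : ℝ) : T1)) ∧
      (Vmap 0 1 ∘ Hmap 0 1) (((1/2 : ℝ) : T1), ((s : ℝ) : T1)) =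
        (((s + 1/2 : ℝ) : T1), ((1/2 : ℝ) : T1)) ∧
      (Vmap 0 1 ∘ Hmap 0 1) (((s + 1/2 : ℝ) : T1), ((1/2 : ℝ) : T1)) =
        (((s : ℝ) : T1), ((s + 1/2 : ℝ) : T1)) ∧
      (Vmap 0 1 ∘ Hmap 0 1)^[3] (((s : ℝ) : T1), ((s + 1/2 : ℝ) : T1)) =
        (((s : ℝ) : T1), ((s + 1/2 : ℝ) : T1)) ∧
      (Vmap 0 1 ∘ Hmap 0 1)^[3] (((1/2 : ℝ) : T1), ((s : ℝ) : T1)) =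
        (((1/2 : ℝ) : T1), ((s : ℝ) : T1)) ∧
      (Vmap 0 1 ∘ Hmap 0 1)^[3] (((s + 1/2 : ℝ) : T1), ((1/2 : ℝ) : T1)) =
        (((s + 1/2 : ℝ) : T1), ((1/2 : ℝ) : T1)) := by
  intro s ⟨hs0, hs2⟩
  have r1 : round s = 0 := by
    rw [round_eq, Int.floor_eq_zero_iff]
    constructor <;> simp <;> linarith
  have r2 : round (s + 1/2) = 1 := by
    rw [round_eq, Int.floor_eq_iff]
    push_cast
    constructor <;> linarith
  have r3 : round (1/2 : ℝ) = 1 := by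
    rw [round_eq]
    norm_num
  have hA : dT ((s : ℝ) : T1) 0 = s := by
    rw [dT_zero, r1]
    simp [abs_of_pos hs0]
  have hB : dT ((s + 1/2 : ℝ) : T1) 0 = 1/2 - s := by
    rw [dT_zero, r2]
    rw [abs_of_nonpos (by push_cast; linarith)]
    push_cast; ring
  have hC : dT ((1/2 : ℝ) : T1) 0 = 1/2 := by
    rw [dT_zero, r3]
    norm_num
  have wrap : ((s + 1 : ℝ) : T1) = ((s : ℝ) : T1) :=
    AddCircle.coe_add_period 1 s
  have h1 : Hmap 0 1 (((s : ℝ) : T1), ((s + 1/2 : ℝ) : T1)) =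
      (((1/2 : ℝ) : T1), ((s + 1/2 : ℝ) : T1)) := by
    simp only [Hmap]
    rw [hB, one_mul, ← AddCircle.coe_add]
    have : s + (1/2 - s) = (1/2 : ℝ) := by ring
    rw [this]
  have v1 : Vmap 0 1 (((1/2 : ℝ) : T1), ((s + 1/2 : ℝ) : T1)) =
      (((1/2 : ℝ) : T1), ((s : ℝ) : T1)) := by
    simp only [Vmap]
    rw [hC, one_mul, ← AddCircle.coe_add]
    have : s + 1/2 + 1/2 = (s + 1 : ℝ) := by ring
    rw [this, wrap]
  have h2 : Hmap 0 1 (((1/2 : ℝ) : T1), ((s : ℝ) : T1)) =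
      (((s + 1/2 : ℝ) : T1), ((s : ℝ) : T1)) := by
    simp only [Hmap]
    rw [hA, one_mul, ← AddCircle.coe_add]
    have : 1/2 + s = (s + 1/2 : ℝ) := by ring
    rw [this]
  have v2 : Vmap 0 1 (((s + 1/2 : ℝ) : T1), ((s : ℝ) : T1)) =
      (((s + 1/2 : ℝ) : T1), ((1/2 : ℝ) : T1)) := by
    simp only [Vmap]
    rw [hB, one_mul, ← AddCircle.coe_add]
    have : s + (1/2 - s) = (1/2 : ℝ) := by ring
    rw [this]
  have h3 : Hmap 0 1 (((s + 1/2 : ℝ) : T1), ((1/2 : ℝ) : T1)) =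
      (((s : ℝ) : T1), ((1/2 : ℝ) : T1)) := by
    simp only [Hmap]
    rw [hC, one_mul, ← AddCircle.coe_add]
    have : s + 1/2 + 1/2 = (s + 1 : ℝ) := by ring
    rw [this, wrap]
  have v3 : Vmap 0 1 (((s : ℝ) : T1), ((1/2 : ℝ) : T1)) =
      (((s : ℝ) : T1), ((s + 1/2 : ℝ) : T1)) := by
    simp only [Vmap]
    rw [hA, one_mul, ← AddCircle.coe_add]
    have : 1/2 + s = (s + 1/2 : ℝ) := by ring
    rw [this]
  have e1 : (Vmap 0 1 ∘ Hmap 0 1) (((s : ℝ) : T1), ((s + 1/2 : ℝ) : T1)) =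
      (((1/2 : ℝ) : T1), ((s : ℝ) : T1)) := by
    simp only [Function.comp_apply]; rw [h1, v1]
  have e2 : (Vmap 0 1 ∘ Hmap 0 1) (((1/2 : ℝ) : T1), ((s : ℝ) : T1)) =
      (((s + 1/2 : ℝ) : T1), ((1/2 : ℝ) : T1)) := by
    simp only [Function.comp_apply]; rw [h2, v2]
  have e3 : (Vmap 0 1 ∘ Hmap 0 1) (((s + 1/2 : ℝ) : T1), ((1/2 : ℝ) : T1)) =
      (((s : ℝ) : T1), ((s + 1/2 : ℝ) : T1)) := by
    simp only [Function.comp_apply]; rw [h3, v3]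
  have it : ∀ p q r t : T1 × T1,
      (Vmap 0 1 ∘ Hmap 0 1) p = q → (Vmap 0 1 ∘ Hmap 0 1) q = r →
      (Vmap 0 1 ∘ Hmap 0 1) r = t →
      (Vmap 0 1 ∘ Hmap 0 1)^[3] p = t := by
    intro p q r t hh1 hh2 hh3
    show (Vmap 0 1 ∘ Hmap 0 1) ((Vmap 0 1 ∘ Hmap 0 1) ((Vmap 0 1 ∘ Hmap 0 1) p)) = t
    rw [hh1, hh2, hh3]
  exact ⟨e1, e2, e3, it _ _ _ _ e1 e2 e3, it _ _ _ _ e2 e3 e1, it _ _ _ _ e3 e1 e2⟩
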